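/- The total number of rooted simple graphs on n labeled vertices, n · 2^{C(n,2)}, equals Σ_{m=1}^{n} C(n,m) · m · c_m · 2^{C(n-m,2)}, where c_m is the number of connected graphs on m labeled vertices. -/

import Mathlib

open Finset SimpleGraph

/-- The number of connected simple graphs on the labeled vertex set `Fin n`. -/
noncomputable def numConn (n : ℕ) : ℕ :=
  Nat.card {G : SimpleGraph (Fin n) // G.Connected}

attribute [local instance] Classical.propDecidable

section CardGraphs

/-- Simple graphs correspond to sets of non-diagonal unordered pairs. -/
noncomputable def graphEquivSet (V : Type*) : SimpleGraph V ≃ Set {e : Sym2 V // ¬ e.IsDiag} where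
  toFun G := {e | e.val ∈ G.edgeSet}
  invFun s := SimpleGraph.fromEdgeSet (Subtype.val '' s)
  left_inv G := by
    have h : Subtype.val '' {e : {e : Sym2 V // ¬ e.IsDiag} | ↑e ∈ G.edgeSet} = G.edgeSet := by
      ext e
      constructor
      · rintro ⟨⟨e, he⟩, h, rfl⟩; exact h
      · intro h; exact ⟨⟨e, G.not_isDiag_of_mem_edgeSet h⟩, h, rfl⟩
    show fromEdgeSet _ = G
    rw [h, fromEdgeSet_edgeSet]
  right_inv s := by
    show {e : {e : Sym2 V // ¬ e.IsDiag} | ↑e ∈ (fromEdgeSet (Subtype.val '' s)).edgeSet} = s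
    ext ⟨e, he⟩
    simp only [Set.mem_setOf_eq, edgeSet_fromEdgeSet, Set.mem_diff, Set.mem_setOf_eq]
    constructor
    · rintro ⟨⟨⟨e', he'⟩, hs, rfl⟩, -⟩; exact hs
    · intro h; exact ⟨⟨⟨e, he⟩, h, rfl⟩, he⟩

lemma card_simpleGraph (V : Type*) [Fintype V] :
    Nat.card (SimpleGraph V) = 2 ^ (Fintype.card V).choose 2 := by
  classical
  rw [Nat.card_congr (graphEquivSet V), Nat.card_eq_fintype_card, Fintype.card_set,
    Sym2.card_subtype_not_diag]

end CardGraphs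

section Glue

variable {n : ℕ} (S : Finset (Fin n))

/-- Glue a graph on `S` and a graph on the complement of `S`. -/
def glueGraph (H : SimpleGraph {x : Fin n // x ∈ S}) (K : SimpleGraph {x : Fin n // x ∉ S}) :
    SimpleGraph (Fin n) where
  Adj a b := (∃ (ha : a ∈ S) (hb : b ∈ S), H.Adj ⟨a, ha⟩ ⟨b, hb⟩) ∨
             (∃ (ha : a ∉ S) (hb : b ∉ S), K.Adj ⟨a, ha⟩ ⟨b, hb⟩)
  symm := ⟨by
    rintro a b (⟨ha, hb, h⟩ | ⟨ha, hb, h⟩)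
    exacts [Or.inl ⟨hb, ha, h.symm⟩, Or.inr ⟨hb, ha, h.symm⟩]⟩
  loopless := ⟨fun a => by rintro (⟨_, _, h⟩ | ⟨_, _, h⟩) <;> exact h.ne rfl⟩

variable {S}

lemma reachable_closure {G : SimpleGraph (Fin n)}
    (hcl : ∀ a b : Fin n, G.Adj a b → a ∈ S → b ∈ S) {a b : Fin n}
    (h : G.Reachable a b) (ha : a ∈ S) : b ∈ S := by
  obtain ⟨w⟩ := h
  induction w with
  | nil => exact ha
  | cons h p ih => exact ih (hcl _ _ h ha)

lemma reachable_restrict {G : SimpleGraph (Fin n)}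
    (hcl : ∀ a b : Fin n, G.Adj a b → a ∈ S → b ∈ S) {a b : Fin n}
    (w : G.Walk a b) (ha : a ∈ S) :
    ∃ hb : b ∈ S, (G.comap (Subtype.val : {x : Fin n // x ∈ S} → Fin n)).Reachable
      ⟨a, ha⟩ ⟨b, hb⟩ := by
  induction w with
  | nil => exact ⟨ha, Reachable.refl _⟩
  | @cons u c b h p ih =>
      have hc : c ∈ S := hcl _ _ h ha
      obtain ⟨hb, r⟩ := ih hc
      exact ⟨hb, Reachable.trans (SimpleGraph.Adj.reachable (by exact h)) r⟩

variable {v : Fin n} (hv : v ∈ S)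

/-- The component condition: the component of `v` in `G` is exactly `S`. -/
def compCond (G : SimpleGraph (Fin n)) (v : Fin n) (S : Finset (Fin n)) : Prop :=
  ∀ w, G.Reachable v w ↔ w ∈ S

lemma compCond.closure {G : SimpleGraph (Fin n)} (h : compCond G v S) :
    ∀ a b : Fin n, G.Adj a b → a ∈ S → b ∈ S := by
  intro a b hab ha
  exact (h b).1 (((h a).2 ha).trans hab.reachable)

include hv in
lemma compCond.connected {G : SimpleGraph (Fin n)} (h : compCond G v S) :
    (G.comap (Subtype.val : {x : Fin n // x ∈ S} → Fin n)).Connected := by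
  haveI : Nonempty {x : Fin n // x ∈ S} := ⟨⟨v, hv⟩⟩
  refine ⟨fun x y => ?_⟩
  have hx : G.Reachable v x.val := (h _).2 x.2
  have hy : G.Reachable v y.val := (h _).2 y.2
  obtain ⟨w⟩ := hx.symm.trans hy
  obtain ⟨hb, r⟩ := reachable_restrict (h.closure) w x.2
  exact r

omit hv in
lemma compCond.glue_eq {G : SimpleGraph (Fin n)} (h : compCond G v S) :
    glueGraph S (G.comap (Subtype.val : {x : Fin n // x ∈ S} → Fin n))
      (G.comap (Subtype.val : {x : Fin n // x ∉ S} → Fin n)) = G := by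
  ext a b
  constructor
  · rintro (⟨ha, hb, hadj⟩ | ⟨ha, hb, hadj⟩) <;> exact hadj
  · intro hadj
    by_cases ha : a ∈ S
    · exact Or.inl ⟨ha, h.closure a b hadj ha, hadj⟩
    · refine Or.inr ⟨ha, fun hb => ha (h.closure b a hadj.symm hb), hadj⟩

omit hv in
lemma glue_restrict_left (H : SimpleGraph {x : Fin n // x ∈ S})
    (K : SimpleGraph {x : Fin n // x ∉ S}) :
    (glueGraph S H K).comap (Subtype.val : {x : Fin n // x ∈ S} → Fin n) = H := by
  ext ⟨a, ha⟩ ⟨b, hb⟩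
  constructor
  · rintro (⟨_, _, hadj⟩ | ⟨ha', _, _⟩)
    · exact hadj
    · exact absurd ha ha'
  · intro hadj
    exact Or.inl ⟨ha, hb, hadj⟩

omit hv in
lemma glue_restrict_right (H : SimpleGraph {x : Fin n // x ∈ S})
    (K : SimpleGraph {x : Fin n // x ∉ S}) :
    (glueGraph S H K).comap (Subtype.val : {x : Fin n // x ∉ S} → Fin n) = K := by
  ext ⟨a, ha⟩ ⟨b, hb⟩
  constructor
  · rintro (⟨ha', _, _⟩ | ⟨_, _, hadj⟩)
    · exact absurd ha' ha
    · exact hadj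
  · intro hadj
    exact Or.inr ⟨ha, hb, hadj⟩

include hv in
lemma glue_compCond {H : SimpleGraph {x : Fin n // x ∈ S}}
    (K : SimpleGraph {x : Fin n // x ∉ S}) (hH : H.Connected) :
    compCond (glueGraph S H K) v S := by
  intro w
  constructor
  · intro hr
    refine reachable_closure ?_ hr hv
    rintro a b (⟨_, hb, _⟩ | ⟨ha, _, _⟩) ha'
    · exact hb
    · exact absurd ha' ha
  · intro hw
    have key : ∀ x y : {x : Fin n // x ∈ S}, H.Reachable x y →
        (glueGraph S H K).Reachable x.val y.val := by
      intro x y hxy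
      obtain ⟨p⟩ := hxy
      induction p with
      | nil => exact Reachable.refl _
      | @cons a c b h p ih =>
          exact Reachable.trans
            (SimpleGraph.Adj.reachable (Or.inl ⟨a.2, c.2, h⟩)) ih
    exact key ⟨v, hv⟩ ⟨w, hw⟩ (hH.preconnected _ _)

/-- The key equivalence: graphs whose component of `v` is `S` correspond to pairs of a
connected graph on `S` and an arbitrary graph on the complement. -/
noncomputable def mainEquiv :
    {G : SimpleGraph (Fin n) // compCond G v S} ≃
      {H : SimpleGraph {x : Fin n // x ∈ S} // H.Connected} ×
        SimpleGraph {x : Fin n // x ∉ S} where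
  toFun G := ⟨⟨G.1.comap Subtype.val, G.2.connected hv⟩, G.1.comap Subtype.val⟩
  invFun HK := ⟨glueGraph S HK.1.1 HK.2, glue_compCond hv HK.2 HK.1.2⟩
  left_inv G := Subtype.ext (G.2.glue_eq)
  right_inv HK := by
    refine Prod.ext (Subtype.ext ?_) ?_
    · exact glue_restrict_left HK.1.1 HK.2
    · exact glue_restrict_right HK.1.1 HK.2

omit hv in
lemma numConn_transport (S : Finset (Fin n)) :
    Nat.card {H : SimpleGraph {x : Fin n // x ∈ S} // H.Connected} = numConn S.card := by
  rw [numConn]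
  refine Nat.card_congr (Equiv.subtypeEquiv S.equivFin.simpleGraph fun H => ?_)
  exact SimpleGraph.Iso.connected_iff ⟨S.equivFin, by simp⟩

omit hv in
lemma card_graphs_compl (S : Finset (Fin n)) :
    Nat.card (SimpleGraph {x : Fin n // x ∉ S}) = 2 ^ ((n - S.card).choose 2) := by
  rw [card_simpleGraph]
  congr 2
  have h1 : Fintype.card {x : Fin n // x ∉ S} = Fintype.card (Fin n) -
      Fintype.card {x : Fin n // x ∈ S} := Fintype.card_subtype_compl _
  rw [h1, Fintype.card_fin]
  congr 1
  exact (Fintype.card_coe S).symm ▸ rfl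

include hv in
lemma card_fiber :
    Nat.card {G : SimpleGraph (Fin n) // compCond G v S} =
      numConn S.card * 2 ^ ((n - S.card).choose 2) := by
  rw [Nat.card_congr (mainEquiv hv), Nat.card_prod, numConn_transport, card_graphs_compl]

end Glue
theorem stmt5 (n : ℕ) :
    n * 2 ^ n.choose 2 = ∑ m ∈ Finset.Icc 1 n,
      n.choose m * m * numConn m * 2 ^ ((n - m).choose 2) := by
  classical
  -- count pairs (G, v)
  have h1 : n * 2 ^ n.choose 2 = Fintype.card (SimpleGraph (Fin n) × Fin n) := by
    rw [Fintype.card_prod, Fintype.card_fin, ← Nat.card_eq_fintype_card,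
      card_simpleGraph, Fintype.card_fin, mul_comm]
  set f : SimpleGraph (Fin n) × Fin n → Finset (Fin n) :=
    fun p => univ.filter fun w => p.1.Reachable p.2 w with hf
  have hfmem : ∀ p : SimpleGraph (Fin n) × Fin n, p.2 ∈ f p :=
    fun p => mem_filter.2 ⟨mem_univ _, Reachable.refl _⟩
  have hcc : ∀ (p : SimpleGraph (Fin n) × Fin n) (S : Finset (Fin n)),
      f p = S ↔ compCond p.1 p.2 S := by
    intro p S
    simp only [hf, Finset.ext_iff, mem_filter, mem_univ, true_and, compCond]
  rw [h1, ← Finset.card_univ,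
    Finset.card_eq_sum_card_fiberwise (f := fun p => (f p).card) (t := Icc 1 n)
      (fun p _ => mem_Icc.2 ⟨Finset.card_pos.2 ⟨p.2, hfmem p⟩,
        le_trans (card_le_card (subset_univ _)) (by simp)⟩)]
  refine Finset.sum_congr rfl fun m hm => ?_
  obtain ⟨hm1, hmn⟩ := mem_Icc.1 hm
  rw [Finset.card_eq_sum_card_fiberwise (f := f) (t := powersetCard m univ)
    (fun p hp => mem_powersetCard.2 ⟨subset_univ _, (mem_filter.1 hp).2⟩)]
  have hstep : ∀ S ∈ powersetCard m univ,
      (((univ : Finset (SimpleGraph (Fin n) × Fin n)).filter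
        fun p => (f p).card = m).filter fun p => f p = S).card
        = m * (numConn m * 2 ^ ((n - m).choose 2)) := by
    intro S hSmem
    obtain ⟨-, hSm⟩ := mem_powersetCard.1 hSmem
    have hfil : (((univ : Finset (SimpleGraph (Fin n) × Fin n)).filter
        fun p => (f p).card = m).filter fun p => f p = S)
        = (univ.filter fun p => f p = S) := by
      ext p
      simp only [mem_filter, mem_univ, true_and]
      exact ⟨fun h => h.2, fun h => ⟨by rw [h, hSm], h⟩⟩
    rw [hfil, Finset.card_eq_sum_card_fiberwise (f := fun p => p.2) (t := S)
      (fun p hp => by rw [← (mem_filter.1 hp).2]; exact hfmem p)]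
    have hone : ∀ v ∈ S,
        ((univ.filter fun p : SimpleGraph (Fin n) × Fin n => f p = S).filter
          fun p => p.2 = v).card = numConn m * 2 ^ ((n - m).choose 2) := by
      intro v hv
      have hc := card_fiber hv
      rw [hSm] at hc
      rw [← hc, Nat.card_eq_fintype_card, Fintype.card_subtype]
      refine Finset.card_bij' (fun p _ => p.1) (fun G _ => (G, v)) ?_ ?_ ?_ ?_
      · intro p hp
        obtain ⟨h1', h2'⟩ := mem_filter.1 hp
        obtain ⟨-, h3'⟩ := mem_filter.1 h1'
        exact mem_filter.2 ⟨mem_univ _, h2' ▸ (hcc p S).1 h3'⟩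
      · intro G hG
        refine mem_filter.2 ⟨mem_filter.2 ⟨mem_univ _, ?_⟩, rfl⟩
        exact (hcc (G, v) S).2 (mem_filter.1 hG).2
      · intro p hp
        obtain ⟨-, h2'⟩ := mem_filter.1 hp
        exact Prod.ext rfl h2'.symm
      · intro G hG
        rfl
    rw [Finset.sum_congr rfl hone, Finset.sum_const, smul_eq_mul, hSm]
  rw [Finset.sum_congr rfl hstep, Finset.sum_const, smul_eq_mul,
    Finset.card_powersetCard, Finset.card_fin]
  ring
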